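/- Let f:(0,∞)→(0,∞) and g(x,y)=y·f(x/y). Then f is HH-convex if and only if g is jointly HH-convex, i.e., g(H_α(a,b), H_α(x,y)) ≤ H_α(g(a,x), g(b,y)) for all a,b,x,y>0 and α∈[0,1], where H_α(u,v)=(α/u+(1-α)/v)^{-1}. -/
import Mathlib

set_option maxHeartbeats 1000000 in
theorem perspective_hh_convex_iff (f : ℝ → ℝ) (hf : ∀ x ∈ Set.Ioi (0:ℝ), 0 < f x)
    (g : ℝ → ℝ → ℝ) (hg : ∀ x y : ℝ, g x y = y * f (x / y)) :
    (∀ u ∈ Set.Ioi (0:ℝ), ∀ v ∈ Set.Ioi (0:ℝ), ∀ α ∈ Set.Icc (0:ℝ) 1,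
      f ((α / u + (1 - α) / v)⁻¹) ≤ (α / f u + (1 - α) / f v)⁻¹) ↔
    (∀ a ∈ Set.Ioi (0:ℝ), ∀ b ∈ Set.Ioi (0:ℝ), ∀ x ∈ Set.Ioi (0:ℝ), ∀ y ∈ Set.Ioi (0:ℝ),
      ∀ α ∈ Set.Icc (0:ℝ) 1,
      g ((α / a + (1 - α) / b)⁻¹) ((α / x + (1 - α) / y)⁻¹) ≤
        (α / g a x + (1 - α) / g b y)⁻¹) := by
  constructor
  · intro hF a ha b hb x hx y hy α hα
    simp only [Set.mem_Ioi] at ha hb hx hy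
    obtain ⟨hα0, hα1⟩ := hα
    have hα1' : (0:ℝ) ≤ 1 - α := by linarith
    have hS2 : 0 < α * y + (1 - α) * x := by
      rcases eq_or_lt_of_le hα0 with h | h
      · rw [← h]; simpa using hx
      · have h1 : 0 < α * y := mul_pos h hy
        have h2 : 0 ≤ (1 - α) * x := mul_nonneg hα1' hx.le
        linarith
    have hT2 : 0 < α * b + (1 - α) * a := by
      rcases eq_or_lt_of_le hα0 with h | h
      · rw [← h]; simpa using ha
      · have h1 : 0 < α * b := mul_pos h hb
        have h2 : 0 ≤ (1 - α) * a := mul_nonneg hα1' ha.le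
        linarith
    have hSalt : α / x + (1 - α) / y = (α * y + (1 - α) * x) / (x * y) := by
      field_simp
    have hTalt : α / a + (1 - α) / b = (α * b + (1 - α) * a) / (a * b) := by
      field_simp
    have hS : 0 < (α * y + (1 - α) * x) / (x * y) := div_pos hS2 (by positivity)
    have hu : 0 < f (a / x) := hf _ (Set.mem_Ioi.mpr (div_pos ha hx))
    have hv : 0 < f (b / y) := hf _ (Set.mem_Ioi.mpr (div_pos hb hy))
    have hβ0 : 0 ≤ α * y / (α * y + (1 - α) * x) :=
      div_nonneg (mul_nonneg hα0 hy.le) hS2.le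
    have hβ1 : α * y / (α * y + (1 - α) * x) ≤ 1 := by
      rw [div_le_one hS2]
      have : 0 ≤ (1 - α) * x := mul_nonneg hα1' hx.le
      linarith
    have key := hF (a / x) (Set.mem_Ioi.mpr (div_pos ha hx))
      (b / y) (Set.mem_Ioi.mpr (div_pos hb hy)) (α * y / (α * y + (1 - α) * x)) ⟨hβ0, hβ1⟩
    have eqA : (α * y / (α * y + (1 - α) * x)) / (a / x)
        + (1 - α * y / (α * y + (1 - α) * x)) / (b / y)
        = ((α * b + (1 - α) * a) / (a * b)) * (((α * y + (1 - α) * x) / (x * y)))⁻¹ := by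
      rw [inv_div]
      field_simp
      ring
    have eqB : (α * y / (α * y + (1 - α) * x)) / f (a / x)
        + (1 - α * y / (α * y + (1 - α) * x)) / f (b / y)
        = (((α * y + (1 - α) * x) / (x * y)))⁻¹
          * (α / (x * f (a / x)) + (1 - α) / (y * f (b / y))) := by
      rw [inv_div]
      field_simp
      ring
    rw [eqA, eqB] at key
    simp only [hg]
    rw [hSalt, hTalt]
    have harg : ((α * b + (1 - α) * a) / (a * b))⁻¹ / (((α * y + (1 - α) * x) / (x * y)))⁻¹
        = (((α * b + (1 - α) * a) / (a * b)) * (((α * y + (1 - α) * x) / (x * y)))⁻¹)⁻¹ := by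
      simp [div_eq_mul_inv, mul_inv]; ring
    rw [harg]
    have hRinv : ((((α * y + (1 - α) * x) / (x * y)))⁻¹
          * (α / (x * f (a / x)) + (1 - α) / (y * f (b / y))))⁻¹
        = ((α * y + (1 - α) * x) / (x * y))
          * (α / (x * f (a / x)) + (1 - α) / (y * f (b / y)))⁻¹ := by
      rw [mul_inv, inv_inv]
    rw [hRinv] at key
    calc (((α * y + (1 - α) * x) / (x * y)))⁻¹
          * f ((((α * b + (1 - α) * a) / (a * b)) * (((α * y + (1 - α) * x) / (x * y)))⁻¹)⁻¹)
        ≤ (((α * y + (1 - α) * x) / (x * y)))⁻¹ * (((α * y + (1 - α) * x) / (x * y))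
            * (α / (x * f (a / x)) + (1 - α) / (y * f (b / y)))⁻¹) :=
          mul_le_mul_of_nonneg_left key (inv_nonneg.mpr hS.le)
      _ = (α / (x * f (a / x)) + (1 - α) / (y * f (b / y)))⁻¹ := by
          rw [← mul_assoc, inv_mul_cancel₀ (ne_of_gt hS), one_mul]
  · intro hG u hu v hv α hα
    have h := hG u hu v hv 1 (Set.mem_Ioi.mpr one_pos) 1 (Set.mem_Ioi.mpr one_pos) α hα
    simpa [hg, div_one] using h
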